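/- Monotonicity of RC11^Ex86 consistency under mode strengthening: Let G and G' be execution graphs identical except that the labeling of G' assigns to each event a mode at least as strong (in the access-mode order ⊑) as in G, so that for every mode-threshold set, e.g., E^⊒rel, W^⊒rlx, R^⊒rlx, E^⊒acq, F^≥sf, the set computed in G is contained in the one computed in G'. Then every derived relation of G among sw, hb, po_rc, ppo_asm, psc is contained in the corresponding relation of G', and consequently if G' is RC11^Ex86-consistent then G is RC11^Ex86-consistent. -/

import Mathlib

/-- Synchronizes-with. -/
def swRel {α : Type*} (Erel Wrlx Rrlx Eacq F : Set α)
    (po rf : α → α → Prop) : α → α → Prop :=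
  fun a d => a ∈ Erel ∧ d ∈ Eacq ∧
    ∃ w r, (a = w ∨ (a ∈ F ∧ po a w)) ∧ w ∈ Wrlx ∧
      Relation.TransGen rf w r ∧ r ∈ Rrlx ∧
      (r = d ∨ (po r d ∧ d ∈ F))

/-- `po_rc`. -/
def poRc {α : Type*} (Wnt RMWtso FgeSf W : Set α) (loc : α → ℕ)
    (po : α → α → Prop) : α → α → Prop :=
  fun a b => (a ∉ Wnt ∧ po a b) ∨ (po a b ∧ b ∈ RMWtso ∪ FgeSf) ∨
    (po a b ∧ loc a = loc b ∧ b ∈ W)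

/-- `ppo_asm`. -/
def ppoAsm {α : Type*} (Wnt RMWtso FgeSf Fsc Rtso Wtso Rd : Set α)
    (po : α → α → Prop) : α → α → Prop :=
  fun a b =>
    (po a b ∧ b ∈ RMWtso ∪ FgeSf) ∨
    (a ∈ Rtso ∪ RMWtso ∪ Fsc ∧ po a b) ∨
    (a ∈ FgeSf ∧ po a b ∧ b ∉ Rd) ∨
    (a ∈ Wtso ∧ po a b ∧ b ∉ Rd ∧ b ∉ Wnt) ∨
    (a ∉ Rd ∧ a ∉ Wnt ∧ po a b ∧ b ∈ Wtso)

/-- `hb := (po_rc ∪ sw)⁺`. -/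
def hbRel {α : Type*} (Erel Wrlx Rrlx Eacq F Wnt RMWtso FgeSf W : Set α)
    (loc : α → ℕ) (po rf : α → α → Prop) : α → α → Prop :=
  Relation.TransGen (fun a b =>
    poRc Wnt RMWtso FgeSf W loc po a b ∨ swRel Erel Wrlx Rrlx Eacq F po rf a b)

/-- `eco := (rfe ∪ mo ∪ rb)⁺`. -/
def ecoRel {α : Type*} (rfe mo rb : α → α → Prop) : α → α → Prop :=
  Relation.TransGen (fun a b => rfe a b ∨ mo a b ∨ rb a b)

/-- `scb := po ∪ po≠loc;hb;po≠loc ∪ hb|loc ∪ mo ∪ rb`. -/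
def scbRel {α : Type*} (loc : α → ℕ) (po hb mo rb : α → α → Prop) :
    α → α → Prop :=
  fun a b => po a b ∨
    (∃ c d, po a c ∧ loc a ≠ loc c ∧ hb c d ∧ po d b ∧ loc d ≠ loc b) ∨
    (hb a b ∧ loc a = loc b) ∨ mo a b ∨ rb a b

/-- `psc_base := (⦗E^sc⦘ ∪ ⦗F^sc⦘;hb?);scb;(⦗E^sc⦘ ∪ hb?;⦗F^sc⦘)`. -/
def pscBase {α : Type*} (Esc Fsc : Set α) (loc : α → ℕ)
    (po hb mo rb : α → α → Prop) : α → α → Prop :=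
  fun a b => ∃ c d,
    ((a = c ∧ a ∈ Esc) ∨ (a ∈ Fsc ∧ (a = c ∨ hb a c))) ∧
    scbRel loc po hb mo rb c d ∧
    ((d = b ∧ b ∈ Esc) ∨ (b ∈ Fsc ∧ (d = b ∨ hb d b)))

/-- `psc_fence := ⦗F^sc⦘;(hb ∪ hb;eco;hb);⦗F^sc⦘`. -/
def pscFence {α : Type*} (Fsc : Set α) (hb eco : α → α → Prop) :
    α → α → Prop :=
  fun a b => a ∈ Fsc ∧ b ∈ Fsc ∧
    (hb a b ∨ ∃ c d, hb a c ∧ eco c d ∧ hb d b)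

/-- `psc := psc_base ∪ psc_fence`. -/
def pscRel {α : Type*} (Esc Fsc : Set α) (loc : α → ℕ)
    (po hb mo rb eco : α → α → Prop) : α → α → Prop :=
  fun a b => pscBase Esc Fsc loc po hb mo rb a b ∨ pscFence Fsc hb eco a b

/-- monotonicity under mode strengthening: if every
upward-closed mode set of `G` is contained in the corresponding set of `G'`
(and `W^nt` shrinks), then each derived relation `sw`, `hb`, `po_rc`,
`ppo_asm`, `psc` of `G` is contained in that of `G'`; consequently, the
RC11^Ex86 consistency conditions for `G'` imply those for `G`. -/
theorem stmt19 {α : Type*}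
    (Erel Wrlx Rrlx Eacq F Wnt RMWtso FgeSf W Fsc Rtso Wtso Rd Esc : Set α)
    (Erel' Wrlx' Rrlx' Eacq' Wnt' RMWtso' FgeSf' Fsc' Rtso' Wtso' Esc' : Set α)
    (loc : α → ℕ) (po rf rfe mo rb : α → α → Prop)
    (h1 : Erel ⊆ Erel') (h2 : Wrlx ⊆ Wrlx') (h3 : Rrlx ⊆ Rrlx')
    (h4 : Eacq ⊆ Eacq') (h5 : Wnt' ⊆ Wnt) (h6 : RMWtso ⊆ RMWtso')
    (h7 : FgeSf ⊆ FgeSf') (h8 : Fsc ⊆ Fsc') (h9 : Rtso ⊆ Rtso')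
    (h10 : Wtso ⊆ Wtso') (h11 : Esc ⊆ Esc') :
    (∀ a b, swRel Erel Wrlx Rrlx Eacq F po rf a b →
        swRel Erel' Wrlx' Rrlx' Eacq' F po rf a b) ∧
    (∀ a b, poRc Wnt RMWtso FgeSf W loc po a b →
        poRc Wnt' RMWtso' FgeSf' W loc po a b) ∧
    (∀ a b, ppoAsm Wnt RMWtso FgeSf Fsc Rtso Wtso Rd po a b →
        ppoAsm Wnt' RMWtso' FgeSf' Fsc' Rtso' Wtso' Rd po a b) ∧
    (∀ a b, hbRel Erel Wrlx Rrlx Eacq F Wnt RMWtso FgeSf W loc po rf a b →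
        hbRel Erel' Wrlx' Rrlx' Eacq' F Wnt' RMWtso' FgeSf' W loc po rf a b) ∧
    (∀ a b, pscRel Esc Fsc loc po
          (hbRel Erel Wrlx Rrlx Eacq F Wnt RMWtso FgeSf W loc po rf)
          mo rb (ecoRel rfe mo rb) a b →
        pscRel Esc' Fsc' loc po
          (hbRel Erel' Wrlx' Rrlx' Eacq' F Wnt' RMWtso' FgeSf' W loc po rf)
          mo rb (ecoRel rfe mo rb) a b) ∧
    ((Irreflexive (fun a b => ∃ c,
          hbRel Erel' Wrlx' Rrlx' Eacq' F Wnt' RMWtso' FgeSf' W loc po rf a c ∧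
          (c = b ∨ ecoRel rfe mo rb c b)) →
      Irreflexive (fun a b => ∃ c,
          hbRel Erel Wrlx Rrlx Eacq F Wnt RMWtso FgeSf W loc po rf a c ∧
          (c = b ∨ ecoRel rfe mo rb c b))) ∧
     (Irreflexive (Relation.TransGen (fun a b =>
          ppoAsm Wnt' RMWtso' FgeSf' Fsc' Rtso' Wtso' Rd po a b ∨
          ecoRel rfe mo rb a b)) →
      Irreflexive (Relation.TransGen (fun a b =>
          ppoAsm Wnt RMWtso FgeSf Fsc Rtso Wtso Rd po a b ∨
          ecoRel rfe mo rb a b))) ∧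
     (Irreflexive (Relation.TransGen (pscRel Esc' Fsc' loc po
          (hbRel Erel' Wrlx' Rrlx' Eacq' F Wnt' RMWtso' FgeSf' W loc po rf)
          mo rb (ecoRel rfe mo rb))) →
      Irreflexive (Relation.TransGen (pscRel Esc Fsc loc po
          (hbRel Erel Wrlx Rrlx Eacq F Wnt RMWtso FgeSf W loc po rf)
          mo rb (ecoRel rfe mo rb))))) := by
  have hsw : ∀ a b, swRel Erel Wrlx Rrlx Eacq F po rf a b →
      swRel Erel' Wrlx' Rrlx' Eacq' F po rf a b := by
    rintro a b ⟨ha, hd, w, r, hw1, hw2, hwr, hr, hrd⟩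
    exact ⟨h1 ha, h4 hd, w, r, hw1, h2 hw2, hwr, h3 hr, hrd⟩
  have hporc : ∀ a b, poRc Wnt RMWtso FgeSf W loc po a b →
      poRc Wnt' RMWtso' FgeSf' W loc po a b := by
    rintro a b (⟨hn, hp⟩ | ⟨hp, hm⟩ | h)
    · exact Or.inl ⟨fun h => hn (h5 h), hp⟩
    · exact Or.inr (Or.inl ⟨hp, hm.elim (fun h => Or.inl (h6 h)) (fun h => Or.inr (h7 h))⟩)
    · exact Or.inr (Or.inr h)
  have hppo : ∀ a b, ppoAsm Wnt RMWtso FgeSf Fsc Rtso Wtso Rd po a b →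
      ppoAsm Wnt' RMWtso' FgeSf' Fsc' Rtso' Wtso' Rd po a b := by
    rintro a b (⟨hp, hm⟩ | ⟨hm, hp⟩ | ⟨hm, hp, hn⟩ | ⟨hm, hp, hn, hn2⟩ | ⟨hn, hn2, hp, hm⟩)
    · exact Or.inl ⟨hp, hm.elim (fun h => Or.inl (h6 h)) (fun h => Or.inr (h7 h))⟩
    · refine Or.inr (Or.inl ⟨?_, hp⟩)
      rcases hm with (h | h) | h
      · exact Or.inl (Or.inl (h9 h))
      · exact Or.inl (Or.inr (h6 h))
      · exact Or.inr (h8 h)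
    · exact Or.inr (Or.inr (Or.inl ⟨h7 hm, hp, hn⟩))
    · exact Or.inr (Or.inr (Or.inr (Or.inl ⟨h10 hm, hp, hn, fun h => hn2 (h5 h)⟩)))
    · exact Or.inr (Or.inr (Or.inr (Or.inr ⟨hn, fun h => hn2 (h5 h), hp, h10 hm⟩)))
  have hhb : ∀ a b, hbRel Erel Wrlx Rrlx Eacq F Wnt RMWtso FgeSf W loc po rf a b →
      hbRel Erel' Wrlx' Rrlx' Eacq' F Wnt' RMWtso' FgeSf' W loc po rf a b := by
    intro a b h
    exact Relation.TransGen.mono (by intro x y h; exact h.elim (fun h => Or.inl (hporc x y h)) (fun h => Or.inr (hsw x y h))) _ _ h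
  have hpsc : ∀ a b, pscRel Esc Fsc loc po
        (hbRel Erel Wrlx Rrlx Eacq F Wnt RMWtso FgeSf W loc po rf)
        mo rb (ecoRel rfe mo rb) a b →
      pscRel Esc' Fsc' loc po
        (hbRel Erel' Wrlx' Rrlx' Eacq' F Wnt' RMWtso' FgeSf' W loc po rf)
        mo rb (ecoRel rfe mo rb) a b := by
    have hscb : ∀ a b, scbRel loc po
        (hbRel Erel Wrlx Rrlx Eacq F Wnt RMWtso FgeSf W loc po rf) mo rb a b →
        scbRel loc po
        (hbRel Erel' Wrlx' Rrlx' Eacq' F Wnt' RMWtso' FgeSf' W loc po rf) mo rb a b := by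
      rintro a b (h | ⟨c, d, h1, h2, h3, h4, h5⟩ | ⟨h1, h2⟩ | h | h)
      · exact Or.inl h
      · exact Or.inr (Or.inl ⟨c, d, h1, h2, hhb _ _ h3, h4, h5⟩)
      · exact Or.inr (Or.inr (Or.inl ⟨hhb _ _ h1, h2⟩))
      · exact Or.inr (Or.inr (Or.inr (Or.inl h)))
      · exact Or.inr (Or.inr (Or.inr (Or.inr h)))
    rintro a b (⟨c, d, hl, hm, hr⟩ | ⟨hf1, hf2, hh⟩)
    · refine Or.inl ⟨c, d, ?_, hscb _ _ hm, ?_⟩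
      · rcases hl with ⟨he, hE⟩ | ⟨hF, hh⟩
        · exact Or.inl ⟨he, h11 hE⟩
        · exact Or.inr ⟨h8 hF, hh.imp id (hhb _ _)⟩
      · rcases hr with ⟨he, hE⟩ | ⟨hF, hh⟩
        · exact Or.inl ⟨he, h11 hE⟩
        · exact Or.inr ⟨h8 hF, hh.imp id (hhb _ _)⟩
    · refine Or.inr ⟨h8 hf1, h8 hf2, ?_⟩
      rcases hh with h | ⟨c, d, hc, he, hd⟩
      · exact Or.inl (hhb _ _ h)
      · exact Or.inr ⟨c, d, hhb _ _ hc, he, hhb _ _ hd⟩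
  refine ⟨hsw, hporc, hppo, hhb, hpsc, ?_, ?_, ?_⟩
  · intro hirr a ⟨c, hc, hcb⟩
    exact hirr a ⟨c, hhb _ _ hc, hcb⟩
  · intro hirr a h
    exact hirr a (Relation.TransGen.mono
      (by intro x y h; exact h.imp (hppo x y) id) _ _ h)
  · intro hirr a h
    exact hirr a (Relation.TransGen.mono (by intro x y h; exact hpsc x y h) _ _ h)
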